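/- For each c ≥ 2 and each nonnegative integrable kernel K with ∫_ℝ K = 1 there exists a constant U(c, K) ≥ 1, depending only on c and K, such that: every positive bounded C² solution φ of the truncated profile equation φ'' − cφ' + g_β(φ)(1 − K*φ) = 0 with β > U(c, K) and lim_{t→−∞} φ(t) = 0 satisfies 0 < φ(t) ≤ U(c, K) for all t ∈ ℝ. Moreover, if ∫_0^{+∞} K(s) ds > 0, then one may take U(c, K) = (∫_0^{+∞} e^{−λ(c)s} K(s) ds)^{−1}. -/

import Mathlib

open Filter MeasureTheory Real Set

noncomputable def conv (K φ : ℝ → ℝ) (t : ℝ) : ℝ := ∫ s, K s * φ (t - s)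

noncomputable def gbeta (β u : ℝ) : ℝ := if u ≤ β then u else max 0 (2 * β - u)

def TruncProfileEq (K : ℝ → ℝ) (c β : ℝ) (φ : ℝ → ℝ) : Prop :=
  ∀ t, deriv (deriv φ) t - c * deriv φ t + gbeta β (φ t) * (1 - conv K φ t) = 0

noncomputable def lam (c : ℝ) : ℝ := (c - Real.sqrt (c ^ 2 - 4)) / 2

lemma lam_pos {c : ℝ} (hc : 2 ≤ c) : 0 < lam c := by
  have h4 : (0:ℝ) ≤ c ^ 2 - 4 := by nlinarith
  have h1 : Real.sqrt (c ^ 2 - 4) < Real.sqrt (c ^ 2) := Real.sqrt_lt_sqrt h4 (by nlinarith)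
  rw [Real.sqrt_sq (by linarith : (0:ℝ) ≤ c)] at h1
  unfold lam; linarith

lemma lam_le_one {c : ℝ} (hc : 2 ≤ c) : lam c ≤ 1 := by
  have h4 : (0:ℝ) ≤ c ^ 2 - 4 := by nlinarith
  have h1 : Real.sqrt ((c - 2) ^ 2) ≤ Real.sqrt (c ^ 2 - 4) := Real.sqrt_le_sqrt (by nlinarith)
  rw [Real.sqrt_sq (by linarith : (0:ℝ) ≤ c - 2)] at h1
  unfold lam; linarith

lemma lam_root {c : ℝ} (hc : 2 ≤ c) : lam c ^ 2 - c * lam c + 1 = 0 := by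
  have h4 : (0:ℝ) ≤ c ^ 2 - 4 := by nlinarith
  have hs : Real.sqrt (c ^ 2 - 4) ^ 2 = c ^ 2 - 4 := Real.sq_sqrt h4
  unfold lam; nlinarith [hs]

lemma gbeta_nonneg {β u : ℝ} (hu : 0 ≤ u) : 0 ≤ gbeta β u := by
  unfold gbeta; split
  · exact hu
  · exact le_max_left _ _

lemma gbeta_le_self {β u : ℝ} (hu : 0 ≤ u) : gbeta β u ≤ u := by
  unfold gbeta; split
  · exact le_rfl
  · rename_i h
    push_neg at h
    exact max_le hu (by linarith)

lemma gbeta_of_le {β u : ℝ} (h : u ≤ β) : gbeta β u = u := if_pos h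

/-- derivative facts from `ContDiff ℝ 2`. -/
lemma diff_of_contDiff2 {φ : ℝ → ℝ} (h : ContDiff ℝ 2 φ) :
    Differentiable ℝ φ ∧ Differentiable ℝ (deriv φ) := by
  have h' : ContDiff ℝ ((1:ℕ∞)+1) φ := h
  rw [contDiff_succ_iff_deriv] at h'
  exact ⟨h'.1, h'.2.2.differentiable (by simp)⟩

/-- if the derivative of a bounded differentiable function is eventually ≥ d > 0, contradiction -/
lemma unbounded_of_deriv_ge {φ : ℝ → ℝ} (hφ : Differentiable ℝ φ) {t₁ d M : ℝ}
    (hd : 0 < d) (h : ∀ t, t₁ ≤ t → d ≤ deriv φ t) (hM : ∀ t, φ t ≤ M) : False := by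
  have hq' : ∀ x : ℝ, HasDerivAt (fun t => φ t - d * t) (deriv φ x - d * 1) x :=
    fun x => (hφ x).hasDerivAt.sub ((hasDerivAt_id x).const_mul d)
  have hqmono : MonotoneOn (fun t => φ t - d * t) (Ici t₁) := by
    apply monotoneOn_of_deriv_nonneg (convex_Ici t₁)
      (Continuous.continuousOn (by have := hφ.continuous; fun_prop))
      (fun x _ => (hq' x).differentiableAt.differentiableWithinAt)
    intro x hx
    rw [interior_Ici] at hx
    rw [(hq' x).deriv]
    have := h x (le_of_lt hx)
    linarith
  have key : ∀ t, t₁ ≤ t → φ t₁ + d * (t - t₁) ≤ φ t := by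
    intro t ht
    have h2 := hqmono self_mem_Ici (mem_Ici.mpr ht) ht
    simp only at h2
    nlinarith [h2]
  obtain ⟨T, hT1, hT2⟩ : ∃ T, t₁ ≤ T ∧ M < φ t₁ + d * (T - t₁) := by
    refine ⟨t₁ + (M - φ t₁ + 1) / d, ?_, ?_⟩
    · have : 0 ≤ (M - φ t₁ + 1) / d := div_nonneg (by linarith [hM t₁]) hd.le
      linarith
    · have hdd : d * ((M - φ t₁ + 1) / d) = M - φ t₁ + 1 := by field_simp
      have : t₁ + (M - φ t₁ + 1) / d - t₁ = (M - φ t₁ + 1) / d := by ring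
      rw [this, hdd]; linarith
  exact absurd (hM T) (by linarith [key T hT1])


lemma conv_nonneg {K φ : ℝ → ℝ} (hK0 : ∀ᵐ s ∂(volume : Measure ℝ), 0 ≤ K s)
    (hpos : ∀ t, 0 < φ t) (t : ℝ) : 0 ≤ conv K φ t :=
  integral_nonneg_of_ae (hK0.mono fun s hs => mul_nonneg hs (hpos _).le)

/-- Lemma A: φ' ≤ λ φ everywhere. -/
lemma deriv_le_lam_mul {c β : ℝ} {K φ : ℝ → ℝ} (hc : 2 ≤ c)
    (hK0 : ∀ᵐ s ∂(volume : Measure ℝ), 0 ≤ K s)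
    (hφ : ContDiff ℝ 2 φ) (hpos : ∀ t, 0 < φ t) {M : ℝ} (hM : ∀ t, φ t ≤ M)
    (heq : TruncProfileEq K c β φ) : ∀ t, deriv φ t ≤ lam c * φ t := by
  obtain ⟨hdiff, hdiff2⟩ := diff_of_contDiff2 hφ
  have hlpos : 0 < lam c := lam_pos hc
  have hl1 : lam c ≤ 1 := lam_le_one hc
  have hroot := lam_root hc
  have hLpos : (1:ℝ) ≤ c - lam c := by linarith
  -- key pointwise inequality
  have key0 : ∀ t, 0 ≤ deriv (deriv φ) t - c * deriv φ t + φ t := by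
    intro t
    have e := heq t
    have hφt := hpos t
    have hcv0 : 0 ≤ conv K φ t := conv_nonneg hK0 hpos t
    have hg0 : 0 ≤ gbeta β (φ t) := gbeta_nonneg hφt.le
    have hgle : gbeta β (φ t) ≤ φ t := gbeta_le_self hφt.le
    have hg1 : gbeta β (φ t) * (1 - conv K φ t) ≤ φ t := by
      rcases le_or_gt (conv K φ t) 1 with hcv | hcv
      · have : gbeta β (φ t) * (1 - conv K φ t) ≤ φ t * 1 :=
          mul_le_mul hgle (by linarith) (by linarith) hφt.le
        linarith
      · have : gbeta β (φ t) * (1 - conv K φ t) ≤ 0 :=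
          mul_nonpos_of_nonneg_of_nonpos hg0 (by linarith)
        linarith
    linarith
  by_contra hcon
  push_neg at hcon
  obtain ⟨t₁, ht₁⟩ := hcon
  have hrd : ∀ t : ℝ, HasDerivAt (fun u => deriv φ u - lam c * φ u)
      (deriv (deriv φ) t - lam c * deriv φ t) t := by
    intro t
    exact ((hdiff2 t).hasDerivAt).sub (((hdiff t).hasDerivAt).const_mul (lam c))
  have hwd : ∀ t : ℝ, HasDerivAt (fun u => Real.exp (-(c - lam c) * u) * (deriv φ u - lam c * φ u))
      (Real.exp (-(c - lam c) * t) * (deriv (deriv φ) t - c * deriv φ t + φ t)) t := by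
    intro t
    have hexp : HasDerivAt (fun u : ℝ => Real.exp (-(c - lam c) * u))
        (Real.exp (-(c - lam c) * t) * (-(c - lam c) * 1)) t :=
      ((hasDerivAt_id t).const_mul (-(c - lam c))).exp
    have hmul := hexp.mul (hrd t)
    refine hmul.congr_deriv (Eq.symm ?_)
    linear_combination (Real.exp (-(c - lam c) * t) * φ t) * hroot
  have hwmono : Monotone (fun u => Real.exp (-(c - lam c) * u) * (deriv φ u - lam c * φ u)) := by
    apply monotone_of_deriv_nonneg (fun t => (hwd t).differentiableAt)
    intro t
    rw [(hwd t).deriv]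
    exact mul_nonneg (Real.exp_nonneg _) (key0 t)
  -- derive a uniform positive lower bound for deriv φ on [t₁, ∞)
  set d := deriv φ t₁ - lam c * φ t₁ with hd
  have hdpos : 0 < d := by rw [hd]; linarith
  have hlow : ∀ t, t₁ ≤ t → d ≤ deriv φ t := by
    intro t ht
    have h1 := hwmono ht
    simp only at h1
    have he1 : (0:ℝ) < Real.exp (-(c - lam c) * t₁) := Real.exp_pos _
    have he2 : (0:ℝ) < Real.exp (-(c - lam c) * t) := Real.exp_pos _
    have he3 : Real.exp (-(c - lam c) * t) ≤ Real.exp (-(c - lam c) * t₁) := by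
      apply Real.exp_le_exp.mpr
      nlinarith
    have hrt : 0 < deriv φ t - lam c * φ t := by nlinarith
    have : Real.exp (-(c - lam c) * t₁) * d ≤ Real.exp (-(c - lam c) * t₁) * (deriv φ t - lam c * φ t) := by
      calc Real.exp (-(c - lam c) * t₁) * d ≤ Real.exp (-(c - lam c) * t) * (deriv φ t - lam c * φ t) := by
              rw [hd]; linarith [h1]
        _ ≤ Real.exp (-(c - lam c) * t₁) * (deriv φ t - lam c * φ t) := by nlinarith
    have h4 : d ≤ deriv φ t - lam c * φ t := le_of_mul_le_mul_left this he1
    nlinarith [hpos t, hlpos]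
  exact unbounded_of_deriv_ge hdiff hdpos hlow hM

/-- consequence: exponential decay comparison to the left -/
lemma exp_decay_left {c β : ℝ} {K φ : ℝ → ℝ} (hc : 2 ≤ c)
    (hK0 : ∀ᵐ s ∂(volume : Measure ℝ), 0 ≤ K s)
    (hφ : ContDiff ℝ 2 φ) (hpos : ∀ t, 0 < φ t) {M : ℝ} (hM : ∀ t, φ t ≤ M)
    (heq : TruncProfileEq K c β φ) :
    ∀ x y : ℝ, x ≤ y → Real.exp (-(lam c) * (y - x)) * φ y ≤ φ x := by
  obtain ⟨hdiff, hdiff2⟩ := diff_of_contDiff2 hφ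
  have hder := deriv_le_lam_mul hc hK0 hφ hpos hM heq
  have hvd : ∀ t : ℝ, HasDerivAt (fun u => Real.exp (-(lam c) * u) * φ u)
      (Real.exp (-(lam c) * t) * (deriv φ t - lam c * φ t)) t := by
    intro t
    have hexp : HasDerivAt (fun u : ℝ => Real.exp (-(lam c) * u))
        (Real.exp (-(lam c) * t) * (-(lam c) * 1)) t :=
      ((hasDerivAt_id t).const_mul (-(lam c))).exp
    have hmul := hexp.mul (hdiff t).hasDerivAt
    refine hmul.congr_deriv (Eq.symm ?_)
    ring
  have hanti : Antitone (fun u => Real.exp (-(lam c) * u) * φ u) := by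
    apply antitone_of_deriv_nonpos (fun t => (hvd t).differentiableAt)
    intro t
    rw [(hvd t).deriv]
    exact mul_nonpos_of_nonneg_of_nonpos (Real.exp_nonneg _) (by linarith [hder t])
  intro x y hxy
  have h1 := hanti hxy
  simp only at h1
  have he : (0:ℝ) < Real.exp ((lam c) * x) := Real.exp_pos _
  have h2 := mul_le_mul_of_nonneg_left h1 he.le
  rw [← mul_assoc, ← mul_assoc, ← Real.exp_add, ← Real.exp_add] at h2
  have e1 : lam c * x + -(lam c) * y = -(lam c) * (y - x) := by ring
  have e2 : lam c * x + -(lam c) * x = 0 := by ring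
  rw [e1, e2, Real.exp_zero, one_mul] at h2
  exact h2

/-- Bootstrap lemma: if φ > U forces conv > 1, then φ ≤ U. -/
lemma bound_of_conv_gt {c β : ℝ} {K φ : ℝ → ℝ} (hc : 2 ≤ c)
    (hφ : ContDiff ℝ 2 φ) (hpos : ∀ t, 0 < φ t) {M : ℝ} (hM : ∀ t, φ t ≤ M)
    (heq : TruncProfileEq K c β φ) (htend : Tendsto φ atBot (nhds 0))
    {U : ℝ} (hU1 : 1 ≤ U) (hkey : ∀ t, U < φ t → 1 < conv K φ t) :
    ∀ t, φ t ≤ U := by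
  obtain ⟨hdiff, hdiff2⟩ := diff_of_contDiff2 hφ
  have hφcont : Continuous φ := hφ.continuous
  have hcpos : (0:ℝ) < c := by linarith
  -- second derivative inequality in the region φ > U
  have hreg : ∀ t, U < φ t → 0 ≤ deriv (deriv φ) t - c * deriv φ t := by
    intro t ht
    have e := heq t
    have h1 : 1 < conv K φ t := hkey t ht
    have hg0 : 0 ≤ gbeta β (φ t) := gbeta_nonneg (hpos t).le
    nlinarith [mul_nonneg hg0 (by linarith : (0:ℝ) ≤ conv K φ t - 1)]
  -- the weighted derivative
  have hwd : ∀ t : ℝ, HasDerivAt (fun u => Real.exp (-c * u) * deriv φ u)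
      (Real.exp (-c * t) * (deriv (deriv φ) t - c * deriv φ t)) t := by
    intro t
    have hexp : HasDerivAt (fun u : ℝ => Real.exp (-c * u))
        (Real.exp (-c * t) * (-c * 1)) t := ((hasDerivAt_id t).const_mul (-c)).exp
    have hmul := hexp.mul (hdiff2 t).hasDerivAt
    refine hmul.congr_deriv (Eq.symm ?_)
    ring
  by_contra hcon
  push_neg at hcon
  obtain ⟨t₀, ht₀⟩ := hcon
  -- a point far to the left where φ < 1
  obtain ⟨t₂, ht₂⟩ := eventually_atBot.mp (htend.eventually (Iio_mem_nhds one_pos))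
  -- the last crossing before t₀
  set S : Set ℝ := {t | t ≤ t₀} ∩ {t | φ t ≤ U} with hS
  have hSne : S.Nonempty := by
    refine ⟨min t₂ t₀, ?_⟩
    simp only [hS, mem_inter_iff, mem_setOf_eq]
    have := ht₂ (min t₂ t₀) (min_le_left _ _)
    exact ⟨min_le_right _ _, by linarith⟩
  have hSclosed : IsClosed S :=
    (isClosed_le continuous_id continuous_const).inter (isClosed_le hφcont continuous_const)
  have hSbdd : BddAbove S := ⟨t₀, fun x hx => hx.1⟩
  set a := sSup S with ha
  have haS : a ∈ S := hSclosed.csSup_mem hSne hSbdd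
  have haU : φ a ≤ U := haS.2
  have hat₀ : a < t₀ := lt_of_le_of_ne haS.1 (fun h => by rw [h] at haU; linarith)
  have hgt : ∀ t, a < t → t ≤ t₀ → U < φ t := by
    intro t h1 h2
    by_contra h3
    push_neg at h3
    exact absurd (le_csSup hSbdd ⟨h2, h3⟩) (not_le.mpr h1)
  -- MVT
  obtain ⟨ξ, hξmem, hξ⟩ := exists_deriv_eq_slope φ hat₀ hφcont.continuousOn hdiff.differentiableOn
  have hξpos : 0 < deriv φ ξ := by
    rw [hξ]
    exact div_pos (by linarith) (by linarith [hξmem.1, hξmem.2])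
  have hφξ : U < φ ξ := hgt ξ hξmem.1 hξmem.2.le
  -- φ stays above U to the right of ξ
  have hstay : ∀ t, ξ ≤ t → U < φ t := by
    intro t ht
    by_contra h3
    push_neg at h3
    set T : Set ℝ := {u | ξ ≤ u} ∩ {u | φ u ≤ U} with hT
    have hTne : T.Nonempty := ⟨t, ht, h3⟩
    have hTclosed : IsClosed T :=
      (isClosed_le continuous_const continuous_id).inter (isClosed_le hφcont continuous_const)
    have hTbdd : BddBelow T := ⟨ξ, fun x hx => hx.1⟩
    set t₁ := sInf T with ht₁
    have ht₁T : t₁ ∈ T := hTclosed.csInf_mem hTne hTbdd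
    have hξt₁ : ξ < t₁ := lt_of_le_of_ne ht₁T.1 (fun h => by
      have h6 : φ t₁ ≤ U := ht₁T.2
      rw [← h] at h6; linarith)
    have hmid : ∀ u, ξ ≤ u → u < t₁ → U < φ u := by
      intro u h1 h2
      by_contra h4
      push_neg at h4
      exact absurd (csInf_le hTbdd ⟨h1, h4⟩) (not_le.mpr h2)
    -- the weighted derivative is monotone on [ξ, t₁]
    have hmono : MonotoneOn (fun u => Real.exp (-c * u) * deriv φ u) (Icc ξ t₁) := by
      apply monotoneOn_of_deriv_nonneg (convex_Icc _ _)
        (Continuous.continuousOn (by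
          exact (Real.continuous_exp.comp (continuous_const.mul continuous_id)).mul
            (hφ.continuous_deriv (by norm_num))))
        (fun x _ => (hwd x).differentiableAt.differentiableWithinAt)
      intro x hx
      rw [interior_Icc] at hx
      rw [(hwd x).deriv]
      exact mul_nonneg (Real.exp_nonneg _) (hreg x (hmid x hx.1.le hx.2))
    -- hence deriv φ > 0 on [ξ, t₁]
    have hderivpos : ∀ x ∈ Icc ξ t₁, 0 < deriv φ x := by
      intro x hx
      have h5 := hmono (left_mem_Icc.mpr (by linarith)) hx hx.1
      simp only at h5
      nlinarith [Real.exp_pos (-c * ξ), Real.exp_pos (-c * x)]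
    have hsm : StrictMonoOn φ (Icc ξ t₁) := by
      apply strictMonoOn_of_deriv_pos (convex_Icc _ _) hφcont.continuousOn
      intro x hx
      rw [interior_Icc] at hx
      exact hderivpos x ⟨hx.1.le, hx.2.le⟩
    have h7 := hsm (left_mem_Icc.mpr hξt₁.le) (right_mem_Icc.mpr hξt₁.le) hξt₁
    have h8 : φ t₁ ≤ U := ht₁T.2
    linarith
  -- now the weighted derivative is monotone on all of [ξ, ∞)
  have hmono2 : MonotoneOn (fun u => Real.exp (-c * u) * deriv φ u) (Ici ξ) := by
    apply monotoneOn_of_deriv_nonneg (convex_Ici _)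
      (Continuous.continuousOn (by
        exact (Real.continuous_exp.comp (continuous_const.mul continuous_id)).mul
          (hφ.continuous_deriv (by norm_num))))
      (fun x _ => (hwd x).differentiableAt.differentiableWithinAt)
    intro x hx
    rw [interior_Ici] at hx
    rw [(hwd x).deriv]
    exact mul_nonneg (Real.exp_nonneg _) (hreg x (hstay x (le_of_lt hx)))
  have hlow : ∀ t, ξ ≤ t → deriv φ ξ ≤ deriv φ t := by
    intro t ht
    have h5 := hmono2 self_mem_Ici (mem_Ici.mpr ht) ht
    simp only at h5
    have he3 : Real.exp (-c * t) ≤ Real.exp (-c * ξ) := by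
      apply Real.exp_le_exp.mpr
      nlinarith
    nlinarith [Real.exp_pos (-c * ξ), Real.exp_pos (-c * t)]
  exact unbounded_of_deriv_ge hdiff hξpos hlow hM

/-- lower bound for the convolution in terms of a left value of φ -/
lemma conv_ge {c : ℝ} {K φ : ℝ → ℝ} (hc : 2 ≤ c)
    (hKi : Integrable K) (hK0 : ∀ᵐ s ∂(volume : Measure ℝ), 0 ≤ K s)
    (hφcont : Continuous φ) (hpos : ∀ t, 0 < φ t) {M : ℝ} (hM : ∀ t, φ t ≤ M)
    (hdecay : ∀ x y : ℝ, x ≤ y → Real.exp (-(lam c) * (y - x)) * φ y ≤ φ x)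
    (S : Set ℝ) (hS : MeasurableSet S) (h : ℝ) (hsub : S ⊆ Ici (-h)) (t : ℝ) :
    (∫ s in S, Real.exp (-(lam c) * (s + h)) * K s) * φ (t + h) ≤ conv K φ t := by
  have hmeasφ : AEStronglyMeasurable (fun s : ℝ => φ (t - s)) volume :=
    (hφcont.comp (continuous_const.sub continuous_id)).aestronglyMeasurable
  have integ1 : Integrable (fun s => K s * φ (t - s)) := by
    have hb : ∃ C, ∀ s : ℝ, ‖φ (t - s)‖ ≤ C := by
      refine ⟨max M 0, fun s => ?_⟩
      rw [Real.norm_eq_abs, abs_of_pos (hpos _)]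
      exact le_max_of_le_left (hM _)
    have := hKi.bdd_mul hmeasφ (ae_of_all _ hb.choose_spec)
    simpa [mul_comm] using this
  have integS2 : IntegrableOn (fun s => Real.exp (-(lam c) * (s + h)) * K s) S := by
    apply Integrable.mono (hKi.restrict (s := S))
    · exact ((Real.continuous_exp.comp (by fun_prop)).aestronglyMeasurable.mul
        hKi.aestronglyMeasurable).restrict
    · filter_upwards [ae_restrict_mem hS] with s hs
      rw [Real.norm_eq_abs, Real.norm_eq_abs, abs_mul, Real.abs_exp]
      have h1 : -(lam c) * (s + h) ≤ 0 := by
        have h2 : (-h : ℝ) ≤ s := hsub hs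
        have h3 : 0 < lam c := lam_pos hc
        nlinarith
      calc Real.exp (-(lam c) * (s + h)) * |K s| ≤ 1 * |K s| :=
            mul_le_mul_of_nonneg_right (Real.exp_le_one_iff.mpr h1) (abs_nonneg _)
        _ = |K s| := one_mul _
  -- step 1 : restrict the integral to S
  have step1 : ∫ s in S, K s * φ (t - s) ≤ conv K φ t :=
    setIntegral_le_integral integ1 (hK0.mono fun s hs => mul_nonneg hs (hpos _).le)
  -- step 2 : pull out the constant
  have step2 : (∫ s in S, Real.exp (-(lam c) * (s + h)) * K s) * φ (t + h)
      = ∫ s in S, (Real.exp (-(lam c) * (s + h)) * K s) * φ (t + h) :=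
    (integral_mul_const _ _).symm
  -- step 3 : compare integrands on S
  have step3 : (∫ s in S, (Real.exp (-(lam c) * (s + h)) * K s) * φ (t + h))
      ≤ ∫ s in S, K s * φ (t - s) := by
    apply setIntegral_mono_ae_restrict (integS2.mul_const _) integ1.integrableOn
    filter_upwards [ae_restrict_of_ae hK0, ae_restrict_mem hS] with s hKs hs
    have hxy : t - s ≤ t + h := by
      have h2 : (-h : ℝ) ≤ s := hsub hs
      linarith
    have h1 := hdecay (t - s) (t + h) hxy
    have he : (t + h) - (t - s) = s + h := by ring
    rw [he] at h1
    calc (Real.exp (-(lam c) * (s + h)) * K s) * φ (t + h)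
        = K s * (Real.exp (-(lam c) * (s + h)) * φ (t + h)) := by ring
      _ ≤ K s * φ (t - s) := mul_le_mul_of_nonneg_left h1 hKs
  calc (∫ s in S, Real.exp (-(lam c) * (s + h)) * K s) * φ (t + h)
      = ∫ s in S, (Real.exp (-(lam c) * (s + h)) * K s) * φ (t + h) := step2
    _ ≤ ∫ s in S, K s * φ (t - s) := step3
    _ ≤ conv K φ t := step1

/-- Window estimate used when the kernel only looks forward. -/
lemma window_bound {c β : ℝ} {K φ : ℝ → ℝ} (hc : 2 ≤ c)
    (hφ : ContDiff ℝ 2 φ) (hpos : ∀ t, 0 < φ t)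
    (heq : TruncProfileEq K c β φ)
    (hdecay : ∀ x y : ℝ, x ≤ y → Real.exp (-(lam c) * (y - x)) * φ y ≤ φ x)
    (hder : ∀ t, deriv φ t ≤ lam c * φ t)
    {J h : ℝ} (hJ : 0 < J) (hh : 0 ≤ h)
    (hconv : ∀ t, J * φ (t + h) ≤ conv K φ t)
    (ts Sig : ℝ)
    (hβw : ∀ t, t ≤ ts → φ t ≤ β) (hSig : ∀ t, t ≤ ts → φ t ≤ Sig)
    (hlow : 1 ≤ J * Real.exp (-2 * lam c) * φ ts) :
    (1 - Real.exp (-c)) / c *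
      (Real.exp (-(lam c) * (h + 2)) * φ ts * (J * Real.exp (-2 * lam c) * φ ts - 1))
      ≤ (1 + lam c) * Sig := by
  obtain ⟨hdiff, hdiff2⟩ := diff_of_contDiff2 hφ
  have hlpos : 0 < lam c := lam_pos hc
  have hcpos : (0:ℝ) < c := by linarith
  set ρ := φ ts with hρdef
  have hρ : 0 < ρ := hpos ts
  have hSigpos : 0 < Sig := lt_of_lt_of_le hρ (hSig ts le_rfl)
  set b := ts - h with hb
  set E := Real.exp (-(lam c) * (h + 2)) * ρ * (J * Real.exp (-2 * lam c) * ρ - 1) with hE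
  have hE0 : 0 ≤ E := by
    apply mul_nonneg (mul_nonneg (Real.exp_nonneg _) hρ.le)
    linarith
  -- second derivative lower bound on the window
  have f4 : ∀ t, b - 2 ≤ t → t ≤ b → E ≤ deriv (deriv φ) t - c * deriv φ t := by
    intro t ht1 ht2
    have hts : t ≤ ts := by rw [hb] at ht2; linarith
    have hth : t + h ≤ ts := by rw [hb] at ht2; linarith
    -- φ (t+h) ≥ e^{-2λ} ρ
    have f1 : Real.exp (-2 * lam c) * ρ ≤ φ (t + h) := by
      have h1 := hdecay (t + h) ts hth
      have h2 : Real.exp (-2 * lam c) ≤ Real.exp (-(lam c) * (ts - (t + h))) := by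
        apply Real.exp_le_exp.mpr
        rw [hb] at ht1
        nlinarith
      nlinarith [h1, h2, hρ]
    -- conv ≥ J e^{-2λ} ρ
    have f2 : J * (Real.exp (-2 * lam c) * ρ) ≤ conv K φ t :=
      le_trans (mul_le_mul_of_nonneg_left f1 hJ.le) (hconv t)
    -- φ t ≥ e^{-λ(h+2)} ρ
    have f3 : Real.exp (-(lam c) * (h + 2)) * ρ ≤ φ t := by
      have h1 := hdecay t ts hts
      have h2 : Real.exp (-(lam c) * (h + 2)) ≤ Real.exp (-(lam c) * (ts - t)) := by
        apply Real.exp_le_exp.mpr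
        rw [hb] at ht1
        nlinarith
      nlinarith [h1, h2, hρ]
    have hgb : gbeta β (φ t) = φ t := gbeta_of_le (hβw t hts)
    have e := heq t
    rw [hgb] at e
    have he2 : deriv (deriv φ) t - c * deriv φ t = φ t * (conv K φ t - 1) := by linarith [e]
    rw [he2, hE]
    have hfac : 0 ≤ J * Real.exp (-2 * lam c) * ρ - 1 := by linarith
    apply mul_le_mul f3 _ hfac (hpos t).le
    have : J * (Real.exp (-2 * lam c) * ρ) = J * Real.exp (-2 * lam c) * ρ := by ring
    rw [this] at f2
    linarith
  -- the auxiliary function G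
  have hGd : ∀ u : ℝ, HasDerivAt (fun v => Real.exp (-c * v) * deriv φ v + E / c * Real.exp (-c * v))
      (Real.exp (-c * u) * ((deriv (deriv φ) u - c * deriv φ u) - E)) u := by
    intro u
    have hexp : HasDerivAt (fun v : ℝ => Real.exp (-c * v))
        (Real.exp (-c * u) * (-c * 1)) u := ((hasDerivAt_id u).const_mul (-c)).exp
    have h1 := (hexp.mul (hdiff2 u).hasDerivAt).add (hexp.const_mul (E / c))
    refine h1.congr_deriv (Eq.symm ?_)
    field_simp
    ring
  have monoG : MonotoneOn (fun v => Real.exp (-c * v) * deriv φ v + E / c * Real.exp (-c * v))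
      (Icc (b - 2) b) := by
    apply monotoneOn_of_deriv_nonneg (convex_Icc _ _)
      (Continuous.continuousOn (by
        exact ((Real.continuous_exp.comp (continuous_const.mul continuous_id)).mul
          (hφ.continuous_deriv (by norm_num))).add
          (continuous_const.mul (Real.continuous_exp.comp (continuous_const.mul continuous_id)))))
      (fun x _ => (hGd x).differentiableAt.differentiableWithinAt)
    intro x hx
    rw [interior_Icc] at hx
    rw [(hGd x).deriv]
    exact mul_nonneg (Real.exp_nonneg _) (by linarith [f4 x hx.1.le hx.2.le])
  -- pointwise derivative bound on [b-2, b-1]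
  set D₀ := lam c * Sig - E / c * (1 - Real.exp (-c)) with hD₀
  have hderbd : ∀ t, b - 2 ≤ t → t ≤ b - 1 → deriv φ t ≤ D₀ := by
    intro t ht1 ht2
    have hGt := monoG (mem_Icc.mpr ⟨ht1, by linarith⟩) (mem_Icc.mpr ⟨by linarith, le_rfl⟩)
      (by linarith)
    simp only at hGt
    set P := Real.exp (-c * t) with hP
    set Q := Real.exp (-c * b) with hQ
    set u := Real.exp (c * (t - b)) with hu
    have hPpos : 0 < P := Real.exp_pos _
    have hQP : Q = u * P := by
      rw [hQ, hu, hP, ← Real.exp_add]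
      congr 1
      ring
    have hKey : P * (deriv φ t + E / c) ≤ P * (u * deriv φ b + E / c * u) := by
      calc P * (deriv φ t + E / c) = P * deriv φ t + E / c * P := by ring
        _ ≤ Q * deriv φ b + E / c * Q := hGt
        _ = P * (u * deriv φ b + E / c * u) := by rw [hQP]; ring
    have h5 : deriv φ t + E / c ≤ u * deriv φ b + E / c * u := le_of_mul_le_mul_left hKey hPpos
    have huec : u ≤ Real.exp (-c) := by
      rw [hu]
      apply Real.exp_le_exp.mpr
      nlinarith
    have hu1 : u ≤ 1 := le_trans huec (Real.exp_le_one_iff.mpr (by linarith))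
    have hu0 : 0 < u := Real.exp_pos _
    have hterm1 : u * deriv φ b ≤ lam c * Sig := by
      rcases le_or_gt (deriv φ b) 0 with hneg | hpos'
      · have h8 : u * deriv φ b ≤ 0 := mul_nonpos_of_nonneg_of_nonpos hu0.le hneg
        have h9 : (0:ℝ) ≤ lam c * Sig := mul_nonneg hlpos.le hSigpos.le
        linarith
      · have h6 : deriv φ b ≤ lam c * φ b := hder b
        have h7 : φ b ≤ Sig := hSig b (by rw [hb]; linarith)
        calc u * deriv φ b ≤ 1 * deriv φ b := mul_le_mul_of_nonneg_right hu1 hpos'.le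
          _ = deriv φ b := one_mul _
          _ ≤ lam c * φ b := h6
          _ ≤ lam c * Sig := mul_le_mul_of_nonneg_left h7 hlpos.le
    have hterm2 : E / c * u ≤ E / c * Real.exp (-c) :=
      mul_le_mul_of_nonneg_left huec (div_nonneg hE0 hcpos.le)
    rw [hD₀]
    linarith
  -- integrate over [b-2, b-1]
  have hq : ∀ x : ℝ, HasDerivAt (fun v => D₀ * v - φ v) (D₀ * 1 - deriv φ x) x :=
    fun x => ((hasDerivAt_id x).const_mul D₀).sub (hdiff x).hasDerivAt
  have hqmono : MonotoneOn (fun v => D₀ * v - φ v) (Icc (b - 2) (b - 1)) := by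
    apply monotoneOn_of_deriv_nonneg (convex_Icc _ _)
      (Continuous.continuousOn (by fun_prop))
      (fun x _ => (hq x).differentiableAt.differentiableWithinAt)
    intro x hx
    rw [interior_Icc] at hx
    rw [(hq x).deriv]
    have := hderbd x hx.1.le hx.2.le
    linarith
  have hfin := hqmono (left_mem_Icc.mpr (by linarith)) (right_mem_Icc.mpr (by linarith))
    (by linarith)
  simp only at hfin
  -- conclude
  have hb2 : φ (b - 2) ≤ Sig := hSig _ (by rw [hb]; linarith)
  have hb1 : 0 < φ (b - 1) := hpos _
  have hstep : φ (b - 1) ≤ φ (b - 2) + D₀ := by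
    have hr : D₀ * (b - 1) = D₀ * (b - 2) + D₀ := by ring
    linarith
  have hED : (1 - Real.exp (-c)) / c * E = E / c * (1 - Real.exp (-c)) := by ring
  rw [hD₀] at hstep
  linarith [hED, hstep, hb2, hb1]

/-- The sharp bound when the kernel has mass on the right. -/
lemma sharp_bound {c : ℝ} (hc : 2 ≤ c) {K : ℝ → ℝ} (hKi : Integrable K)
    (hK0 : ∀ᵐ s ∂(volume : Measure ℝ), 0 ≤ K s) (hK1 : (∫ s, K s) = 1)
    (hP : 0 < ∫ s in Ioi (0 : ℝ), K s) :
    1 ≤ (∫ s in Ioi (0 : ℝ), Real.exp (-(lam c) * s) * K s)⁻¹ ∧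
      ∀ (β : ℝ) (φ : ℝ → ℝ),
        (∫ s in Ioi (0 : ℝ), Real.exp (-(lam c) * s) * K s)⁻¹ < β →
        ContDiff ℝ 2 φ → (∀ t, 0 < φ t) → (∃ M, ∀ t, φ t ≤ M) →
        TruncProfileEq K c β φ → Tendsto φ atBot (nhds 0) →
        ∀ t, φ t ≤ (∫ s in Ioi (0 : ℝ), Real.exp (-(lam c) * s) * K s)⁻¹ := by
  have hlpos : 0 < lam c := lam_pos hc
  set I₀ := ∫ s in Ioi (0 : ℝ), Real.exp (-(lam c) * s) * K s with hI₀
  have hmeasI : MeasurableSet (Ioi (0:ℝ)) := measurableSet_Ioi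
  have h0ae : 0 ≤ᶠ[ae (volume.restrict (Ioi (0:ℝ)))] fun s => Real.exp (-(lam c) * s) * K s :=
    ae_restrict_of_ae (hK0.mono fun s hs => mul_nonneg (Real.exp_nonneg _) hs)
  have hintegI : IntegrableOn (fun s => Real.exp (-(lam c) * s) * K s) (Ioi (0:ℝ)) := by
    apply Integrable.mono (hKi.restrict (s := Ioi (0:ℝ)))
    · exact ((Real.continuous_exp.comp (by fun_prop)).aestronglyMeasurable.mul
        hKi.aestronglyMeasurable).restrict
    · filter_upwards [ae_restrict_mem hmeasI] with s hs
      rw [Real.norm_eq_abs, Real.norm_eq_abs, abs_mul, Real.abs_exp]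
      have h1 : -(lam c) * s ≤ 0 := by
        have : (0:ℝ) < s := hs
        nlinarith
      calc Real.exp (-(lam c) * s) * |K s| ≤ 1 * |K s| :=
            mul_le_mul_of_nonneg_right (Real.exp_le_one_iff.mpr h1) (abs_nonneg _)
        _ = |K s| := one_mul _
  -- positivity of I₀
  have hI₀pos : 0 < I₀ := by
    rcases lt_or_ge 0 I₀ with h | h
    · exact h
    · exfalso
      have hz : I₀ = 0 := le_antisymm h (integral_nonneg_of_ae h0ae)
      rw [hI₀] at hz
      rw [integral_eq_zero_iff_of_nonneg_ae h0ae hintegI] at hz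
      have hKz : (fun s => K s) =ᶠ[ae (volume.restrict (Ioi (0:ℝ)))] 0 := by
        filter_upwards [hz] with s hs
        have he : Real.exp (-(lam c) * s) ≠ 0 := (Real.exp_pos _).ne'
        simpa [he] using hs
      have : ∫ s in Ioi (0:ℝ), K s = 0 := by
        rw [integral_congr_ae hKz]
        simp
      linarith
  -- I₀ ≤ 1
  have hI₀le1 : I₀ ≤ 1 := by
    have h1 : I₀ ≤ ∫ s in Ioi (0:ℝ), K s := by
      apply setIntegral_mono_ae_restrict hintegI hKi.integrableOn
      filter_upwards [ae_restrict_of_ae hK0, ae_restrict_mem hmeasI] with s hKs hs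
      have h2 : Real.exp (-(lam c) * s) ≤ 1 := Real.exp_le_one_iff.mpr (by
        have : (0:ℝ) < s := hs
        nlinarith)
      calc Real.exp (-(lam c) * s) * K s ≤ 1 * K s := mul_le_mul_of_nonneg_right h2 hKs
        _ = K s := one_mul _
    have h2 : ∫ s in Ioi (0:ℝ), K s ≤ ∫ s, K s := setIntegral_le_integral hKi hK0
    rw [hK1] at h2
    linarith
  have hU1 : 1 ≤ I₀⁻¹ := one_le_inv_iff₀.mpr ⟨hI₀pos, hI₀le1⟩
  refine ⟨hU1, ?_⟩
  rintro β φ hβ hφ hpos ⟨M, hM⟩ heq htend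
  have hdecay := exp_decay_left hc hK0 hφ hpos hM heq
  apply bound_of_conv_gt hc hφ hpos hM heq htend hU1
  intro t ht
  have hconv := conv_ge hc hKi hK0 hφ.continuous hpos hM hdecay (Ioi (0:ℝ)) hmeasI 0
    (by intro x hx; simpa using le_of_lt (mem_Ioi.mp hx)) t
  simp only [add_zero] at hconv
  have h3 : I₀ * I₀⁻¹ < I₀ * φ t := mul_lt_mul_of_pos_left ht hI₀pos
  rw [mul_inv_cancel₀ hI₀pos.ne'] at h3
  exact lt_of_lt_of_le h3 hconv

set_option maxHeartbeats 2000000 in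
/-- The bound when the kernel vanishes on the right. -/
lemma hard_bound {c : ℝ} (hc : 2 ≤ c) {K : ℝ → ℝ} (hKi : Integrable K)
    (hK0 : ∀ᵐ s ∂(volume : Measure ℝ), 0 ≤ K s) (hK1 : (∫ s, K s) = 1)
    (hP : ¬ 0 < ∫ s in Ioi (0 : ℝ), K s) :
    ∃ U : ℝ, 1 ≤ U ∧
      ∀ (β : ℝ) (φ : ℝ → ℝ), U < β →
        ContDiff ℝ 2 φ → (∀ t, 0 < φ t) → (∃ M, ∀ t, φ t ≤ M) →
        TruncProfileEq K c β φ → Tendsto φ atBot (nhds 0) →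
        ∀ t, φ t ≤ U := by
  have hlpos : 0 < lam c := lam_pos hc
  have hcpos : (0:ℝ) < c := by linarith
  have hIoi0 : ∫ s in Ioi (0:ℝ), K s = 0 :=
    le_antisymm (not_lt.mp hP) (integral_nonneg_of_ae (ae_restrict_of_ae hK0))
  have hIic : ∫ s in Iic (0:ℝ), K s = 1 := by
    have h1 := integral_add_compl (measurableSet_Iic (a := (0:ℝ))) hKi (f := K)
    rw [compl_Iic] at h1
    rw [hK1, hIoi0] at h1
    linarith
  -- find n with enough mass in (-n, 0]
  have hUnion : ⋃ n : ℕ, Ioc (-(n:ℝ)) 0 = Iic (0:ℝ) := by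
    ext x
    simp only [mem_iUnion, mem_Ioc, mem_Iic]
    constructor
    · rintro ⟨n, _, h2⟩; exact h2
    · intro hx
      obtain ⟨n, hn⟩ := exists_nat_gt (-x)
      exact ⟨n, by linarith, hx⟩
  have hmonoS : Monotone (fun n : ℕ => Ioc (-(n:ℝ)) 0) := by
    intro m n hmn
    exact Ioc_subset_Ioc_left (neg_le_neg (Nat.cast_le.mpr hmn))
  have htds := tendsto_setIntegral_of_monotone (fun n : ℕ => measurableSet_Ioc) hmonoS
    (by rw [hUnion]; exact hKi.integrableOn : IntegrableOn K (⋃ n : ℕ, Ioc (-(n:ℝ)) 0))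
  rw [hUnion, hIic] at htds
  obtain ⟨n, hn⟩ := (htds.eventually (eventually_gt_nhds (by norm_num : (1:ℝ)/2 < 1))).exists
  set S := Ioc (-(n:ℝ)) 0 with hSdef
  have hmeasS : MeasurableSet S := measurableSet_Ioc
  have hsub : S ⊆ Ici (-(n:ℝ)) := fun x hx => le_of_lt hx.1
  -- the weight J
  set J := ∫ s in S, Real.exp (-(lam c) * (s + (n:ℝ))) * K s with hJdef
  have integJ : IntegrableOn (fun s => Real.exp (-(lam c) * (s + (n:ℝ))) * K s) S := by
    apply Integrable.mono (hKi.restrict (s := S))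
    · exact ((Real.continuous_exp.comp (by fun_prop)).aestronglyMeasurable.mul
        hKi.aestronglyMeasurable).restrict
    · filter_upwards [ae_restrict_mem hmeasS] with s hs
      rw [Real.norm_eq_abs, Real.norm_eq_abs, abs_mul, Real.abs_exp]
      have h1 : -(lam c) * (s + (n:ℝ)) ≤ 0 := by
        have h2 : -(n:ℝ) < s := hs.1
        nlinarith
      calc Real.exp (-(lam c) * (s + n)) * |K s| ≤ 1 * |K s| :=
            mul_le_mul_of_nonneg_right (Real.exp_le_one_iff.mpr h1) (abs_nonneg _)
        _ = |K s| := one_mul _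
  have hJlb : Real.exp (-(lam c) * (n:ℝ)) * ∫ s in S, K s ≤ J := by
    have h1 : ∫ s in S, Real.exp (-(lam c) * (n:ℝ)) * K s
        = Real.exp (-(lam c) * (n:ℝ)) * ∫ s in S, K s := integral_const_mul _ _
    rw [← h1, hJdef]
    apply setIntegral_mono_ae_restrict ((hKi.integrableOn).const_mul _) integJ
    filter_upwards [ae_restrict_of_ae hK0, ae_restrict_mem hmeasS] with s hKs hs
    have h2 : Real.exp (-(lam c) * (n:ℝ)) ≤ Real.exp (-(lam c) * (s + n)) := by
      apply Real.exp_le_exp.mpr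
      have h3 : s ≤ 0 := hs.2
      nlinarith
    exact mul_le_mul_of_nonneg_right h2 hKs
  have hJpos : 0 < J :=
    lt_of_lt_of_le (mul_pos (Real.exp_pos _) (by linarith)) hJlb
  -- the constants
  set κ := (1 - Real.exp (-c)) / c with hκdef
  have hκpos : 0 < κ := by
    apply div_pos _ hcpos
    have : Real.exp (-c) < 1 := Real.exp_lt_one_iff.mpr (by linarith)
    linarith
  set a := Real.exp (-(lam c) * ((n:ℝ) + 2)) with hadef
  set bb := Real.exp (-2 * lam c) with hbbdef
  have hapos : 0 < a := Real.exp_pos _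
  have hbbpos : 0 < bb := Real.exp_pos _
  have hee : Real.exp (2 * lam c) * bb = 1 := by
    rw [hbbdef, ← Real.exp_add]
    norm_num
  set X := κ * J * (a * bb) with hXdef
  have hXpos : 0 < X := mul_pos (mul_pos hκpos hJpos) (mul_pos hapos hbbpos)
  set B₂ := 4 * Real.exp (2 * lam c) / J with hB₂def
  set B₁ := 8 * (1 + lam c) / X with hB₁def
  refine ⟨max 1 (max B₂ B₁), le_max_left _ _, ?_⟩
  set U := max 1 (max B₂ B₁) with hUdef
  have hU1 : (1:ℝ) ≤ U := le_max_left _ _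
  have hUB₂ : B₂ ≤ U := le_trans (le_max_left _ _) (le_max_right _ _)
  have hUB₁ : B₁ ≤ U := le_trans (le_max_right _ _) (le_max_right _ _)
  rintro β φ hUβ hφ hpos ⟨M, hM⟩ heq htend
  have hβpos : (0:ℝ) < β := by linarith
  have hφcont : Continuous φ := hφ.continuous
  have hdecay := exp_decay_left hc hK0 hφ hpos hM heq
  have hder := deriv_le_lam_mul hc hK0 hφ hpos hM heq
  have hconv : ∀ t, J * φ (t + (n:ℝ)) ≤ conv K φ t := fun t =>
    conv_ge hc hKi hK0 hφcont hpos hM hdecay S hmeasS (n:ℝ) hsub t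
  -- Step A : φ never exceeds β
  have hble : ∀ t, φ t ≤ β := by
    by_contra hcon
    push_neg at hcon
    obtain ⟨t₀, ht₀⟩ := hcon
    set Sβ := {t : ℝ | β ≤ φ t} with hSβ
    have hSβne : Sβ.Nonempty := ⟨t₀, ht₀.le⟩
    have hSβclosed : IsClosed Sβ := isClosed_le continuous_const hφcont
    obtain ⟨t₂, ht₂⟩ := eventually_atBot.mp (htend.eventually (Iio_mem_nhds hβpos))
    have hSβbdd : BddBelow Sβ := by
      refine ⟨t₂, fun x hx => ?_⟩
      by_contra h
      push_neg at h
      have := ht₂ x h.le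
      have : β ≤ φ x := hx
      linarith [ht₂ x h.le]
    set tstar := sInf Sβ with htstardef
    have htstar : tstar ∈ Sβ := hSβclosed.csInf_mem hSβne hSβbdd
    have hlt : ∀ t, t < tstar → φ t < β := by
      intro t h
      by_contra h2
      push_neg at h2
      exact absurd (csInf_le hSβbdd h2) (not_le.mpr h)
    have hfe : φ tstar ≤ β := by
      have hseq : Tendsto (fun k : ℕ => φ (tstar - 1/(k+1))) atTop (nhds (φ tstar)) := by
        apply (hφcont.continuousAt).tendsto.comp
        have h1 : Tendsto (fun k : ℕ => (1:ℝ)/(k+1)) atTop (nhds 0) :=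
          tendsto_one_div_add_atTop_nhds_zero_nat
        have h2 : Tendsto (fun k : ℕ => tstar - 1/(k+1)) atTop (nhds (tstar - 0)) :=
          Tendsto.sub tendsto_const_nhds h1
        simpa using h2
      apply le_of_tendsto hseq
      filter_upwards with k
      have : (0:ℝ) < 1/(k+1) := by positivity
      exact (hlt _ (by linarith)).le
    have hρβ : φ tstar = β := le_antisymm hfe htstar
    have hβw : ∀ t, t ≤ tstar → φ t ≤ β := by
      intro t h
      rcases lt_or_eq_of_le h with h' | h'
      · exact (hlt t h').le
      · rw [h', hρβ]
    have hlow4 : 4 ≤ J * bb * β := by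
      have h1 : B₂ < β := lt_of_le_of_lt hUB₂ hUβ
      rw [hB₂def, div_lt_iff₀ hJpos] at h1
      have h2 := mul_lt_mul_of_pos_right h1 hbbpos
      linarith [hee, h2]
    have hwin := window_bound hc hφ hpos heq hdecay hder hJpos (Nat.cast_nonneg n)
      hconv tstar β hβw hβw (by rw [hρβ]; linarith)
    rw [hρβ] at hwin
    -- numeric contradiction
    have h1 : (3:ℝ)/4 * (J * bb * β) ≤ J * bb * β - 1 := by linarith
    have h2 : a * β * ((3:ℝ)/4 * (J * bb * β)) ≤ a * β * (J * bb * β - 1) :=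
      mul_le_mul_of_nonneg_left h1 (mul_nonneg hapos.le hβpos.le)
    have h3 : κ * (a * β * ((3:ℝ)/4 * (J * bb * β))) ≤ (1 + lam c) * β := by
      calc κ * (a * β * ((3:ℝ)/4 * (J * bb * β))) ≤ κ * (a * β * (J * bb * β - 1)) :=
            mul_le_mul_of_nonneg_left h2 hκpos.le
        _ = (1 - Real.exp (-c)) / c * (a * β * (J * bb * β - 1)) := by rw [hκdef]
        _ ≤ (1 + lam c) * β := hwin
    have h4 : κ * (a * β * ((3:ℝ)/4 * (J * bb * β))) = (3:ℝ)/4 * (X * β^2) := by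
      rw [hXdef]; ring
    have h5 : 8 * (1 + lam c) < β * X := by
      have := lt_of_le_of_lt hUB₁ hUβ
      rw [hB₁def, div_lt_iff₀ hXpos] at this
      exact this
    have h6 : (0:ℝ) < (1 + lam c) * β := mul_pos (by linarith) hβpos
    have h9 := mul_lt_mul_of_pos_right h5 hβpos
    linarith [h3, h4, h9, h6]
  -- Step B : φ ≤ U
  intro t
  by_contra hcon2
  push_neg at hcon2
  have hbddR : BddAbove (range φ) := ⟨M, by rintro y ⟨u, rfl⟩; exact hM u⟩
  set σ := sSup (range φ) with hσdef
  have hσub : ∀ u, φ u ≤ σ := fun u => le_csSup hbddR ⟨u, rfl⟩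
  have hσU : U < σ := lt_of_lt_of_le hcon2 (hσub t)
  have hσpos : 0 < σ := by linarith
  obtain ⟨y, ⟨tstar, rfl⟩, hy⟩ :=
    exists_lt_of_lt_csSup ⟨φ 0, mem_range_self 0⟩ (half_lt_self hσpos)
  -- σ/2 < φ tstar
  have hlow2 : 2 ≤ J * bb * φ tstar := by
    have h1 : B₂ < σ := lt_of_le_of_lt hUB₂ hσU
    rw [hB₂def, div_lt_iff₀ hJpos] at h1
    have h2 := mul_lt_mul_of_pos_right h1 hbbpos
    have h3 : σ / 2 < φ tstar := hy
    have h4 := mul_lt_mul_of_pos_left h3 (mul_pos hJpos hbbpos)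
    linarith [hee, h2, h4]
  have hwin := window_bound hc hφ hpos heq hdecay hder hJpos (Nat.cast_nonneg n)
    hconv tstar σ (fun u _ => hble u) (fun u _ => hσub u) (by linarith)
  -- numeric contradiction
  set ρ := φ tstar with hρdef
  have hρpos : 0 < ρ := hpos tstar
  have h1 : (1:ℝ)/2 * (J * bb * ρ) ≤ J * bb * ρ - 1 := by linarith
  have h2 : a * ρ * ((1:ℝ)/2 * (J * bb * ρ)) ≤ a * ρ * (J * bb * ρ - 1) :=
    mul_le_mul_of_nonneg_left h1 (mul_nonneg hapos.le hρpos.le)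
  have h3 : κ * (a * ρ * ((1:ℝ)/2 * (J * bb * ρ))) ≤ (1 + lam c) * σ := by
    calc κ * (a * ρ * ((1:ℝ)/2 * (J * bb * ρ))) ≤ κ * (a * ρ * (J * bb * ρ - 1)) :=
          mul_le_mul_of_nonneg_left h2 hκpos.le
      _ = (1 - Real.exp (-c)) / c * (a * ρ * (J * bb * ρ - 1)) := by rw [hκdef]
      _ ≤ (1 + lam c) * σ := hwin
  have h4 : κ * (a * ρ * ((1:ℝ)/2 * (J * bb * ρ))) = (1:ℝ)/2 * (X * ρ^2) := by
    rw [hXdef]; ring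
  have h5 : 8 * (1 + lam c) < σ * X := by
    have := lt_of_le_of_lt hUB₁ hσU
    rw [hB₁def, div_lt_iff₀ hXpos] at this
    exact this
  have h6 : (0:ℝ) < (1 + lam c) * σ := mul_pos (by linarith) hσpos
  have hρσ : σ / 2 < ρ := hy
  have hρ2 : σ^2/4 < ρ^2 := by
    have h11 : (σ/2)^2 < ρ^2 := by
      apply pow_lt_pow_left₀ hρσ (by linarith) (by norm_num)
    have h12 : (σ/2)^2 = σ^2/4 := by ring
    linarith
  have h10 : X * (σ^2/4) ≤ X * ρ^2 := mul_le_mul_of_nonneg_left hρ2.le hXpos.le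
  have h9 := mul_lt_mul_of_pos_right h5 hσpos
  linarith [h3, h4, h9, h10, h6]

/-- existence of a uniform a priori bound `U(c,K) ≥ 1` for all
positive bounded solutions with `φ(-∞) = 0` of the truncated profile equation
with `β > U(c,K)`; if `∫_0^∞ K > 0`, the explicit value
`(∫_0^∞ e^{-λ(c)s}K(s)ds)⁻¹` works. -/
theorem uniform_a_priori_bound
    (c : ℝ) (hc : 2 ≤ c)
    (K : ℝ → ℝ) (hKi : Integrable K)
    (hK0 : ∀ᵐ s ∂(volume : Measure ℝ), 0 ≤ K s)
    (hK1 : (∫ s, K s) = 1) :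
    (∃ U : ℝ, 1 ≤ U ∧
      ∀ (β : ℝ) (φ : ℝ → ℝ), U < β →
        ContDiff ℝ 2 φ → (∀ t, 0 < φ t) → (∃ M, ∀ t, φ t ≤ M) →
        TruncProfileEq K c β φ → Tendsto φ atBot (nhds 0) →
        ∀ t, φ t ≤ U) ∧
    (0 < ∫ s in Ioi (0 : ℝ), K s →
      1 ≤ (∫ s in Ioi (0 : ℝ), Real.exp (-(lam c) * s) * K s)⁻¹ ∧
      ∀ (β : ℝ) (φ : ℝ → ℝ),
        (∫ s in Ioi (0 : ℝ), Real.exp (-(lam c) * s) * K s)⁻¹ < β →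
        ContDiff ℝ 2 φ → (∀ t, 0 < φ t) → (∃ M, ∀ t, φ t ≤ M) →
        TruncProfileEq K c β φ → Tendsto φ atBot (nhds 0) →
        ∀ t, φ t ≤ (∫ s in Ioi (0 : ℝ), Real.exp (-(lam c) * s) * K s)⁻¹) := by
  constructor
  · by_cases hP : 0 < ∫ s in Ioi (0:ℝ), K s
    · obtain ⟨hU1, hbd⟩ := sharp_bound hc hKi hK0 hK1 hP
      exact ⟨_, hU1, hbd⟩
    · exact hard_bound hc hKi hK0 hK1 hP
  · intro hP
    exact sharp_bound hc hKi hK0 hK1 hP
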